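/- arXiv:1907.10469 — 3 statements merged into one kernel-verified Lean document; each statement's English description precedes it below -/
import Mathlib

section
/- Every stratified ASP program, possibly including constraints (rules with empty head), admits at most one answer set. -/
/- A formalization of Answer Set Programming (ASP):
   non-ground programs, grounding, interpretations, stable models,
   dependency graphs, stratification, compilable subprograms,
   and splitting sets for ground programs. -/

namespace ASP

/-- A term is a variable or a constant. -/
inductive Term where
  | var : ℕ → Term
  | const : ℕ → Term

/-- A (non-ground) atom `p(t1,...,tk)`. -/
structure Atom where
  pred : ℕ
  args : List Term

/-- A literal: an atom or a negated atom. -/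
inductive Lit where
  | pos : Atom → Lit
  | neg : Atom → Lit

/-- A rule `h1 | ... | hn :- b1, ..., bm`. -/
structure Rule where
  head : List Atom
  body : List Lit

/-- An ASP program is a set of rules (finiteness is stated as a hypothesis). -/
abbrev Program := Set Rule

/-- A ground atom. -/
structure GAtom where
  pred : ℕ
  args : List ℕ

/-- A ground literal. -/
inductive GLit where
  | pos : GAtom → GLit
  | neg : GAtom → GLit

/-- A ground rule. -/
structure GRule where
  head : List GAtom
  body : List GLit

/-- A ground program. -/
abbrev GProgram := Set GRule

/-- The atom of a literal. -/
def Lit.atom : Lit → Atom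
  | .pos a => a
  | .neg a => a

/-- The atom of a ground literal. -/
def GLit.atom : GLit → GAtom
  | .pos a => a
  | .neg a => a

/-- Whether a ground literal is positive. -/
def GLit.isPos : GLit → Bool
  | .pos _ => true
  | .neg _ => false

/-- The atoms occurring in a rule (head or body). -/
def Rule.atoms (r : Rule) : Set Atom :=
  {a | a ∈ r.head ∨ ∃ l ∈ r.body, l.atom = a}

/-- The variables occurring in a rule. -/
def Rule.vars (r : Rule) : Set ℕ :=
  {v | ∃ a ∈ r.atoms, Term.var v ∈ a.args}

/-- The Herbrand universe of a program: the constants occurring in it. -/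
def herbrandU (π : Program) : Set ℕ :=
  {c | ∃ r ∈ π, ∃ a ∈ r.atoms, Term.const c ∈ a.args}

/-- The predicate symbols occurring in a program. -/
def preds (π : Program) : Set ℕ :=
  {p | ∃ r ∈ π, ∃ a ∈ r.atoms, a.pred = p}

/-- The predicate symbols occurring in heads of rules of a program. -/
def headPreds (π : Program) : Set ℕ :=
  {p | ∃ r ∈ π, ∃ a ∈ r.head, a.pred = p}

/-- The Herbrand base of a program: ground atoms built from predicate
    symbols of the program and constants of its Herbrand universe. -/
def herbrandB (π : Program) : Set GAtom :=
  {ga | ga.pred ∈ preds π ∧ ∀ c ∈ ga.args, c ∈ herbrandU π}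

/-- Applying a substitution (from variables to constants) to a term. -/
def Term.subst (σ : ℕ → ℕ) : Term → ℕ
  | .var v => σ v
  | .const c => c

/-- Applying a substitution to an atom. -/
def Atom.ground (σ : ℕ → ℕ) (a : Atom) : GAtom :=
  ⟨a.pred, a.args.map (Term.subst σ)⟩

/-- Applying a substitution to a literal. -/
def Lit.ground (σ : ℕ → ℕ) : Lit → GLit
  | .pos a => .pos (a.ground σ)
  | .neg a => .neg (a.ground σ)

/-- Applying a substitution to a rule. -/
def Rule.ground (σ : ℕ → ℕ) (r : Rule) : GRule :=
  ⟨r.head.map (Atom.ground σ), r.body.map (Lit.ground σ)⟩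

/-- `Ground(π)`: all ground instances of rules of `π`, substituting the
    variables by constants of the Herbrand universe of `π`. -/
def groundProg (π : Program) : GProgram :=
  {gr | ∃ r ∈ π, ∃ σ : ℕ → ℕ, (∀ v ∈ r.vars, σ v ∈ herbrandU π) ∧ gr = r.ground σ}

/-- `I⁺`: the set of atoms occurring positively in `I`. -/
def plus (I : Set GLit) : Set GAtom := {a | GLit.pos a ∈ I}

/-- An interpretation over a set `B` of ground atoms: a set of ground literals
    over `B` containing, for each `a ∈ B`, exactly one of `a` and `∼a`. -/
def IsInterp (B : Set GAtom) (I : Set GLit) : Prop :=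
  (∀ l ∈ I, l.atom ∈ B) ∧
  ∀ a ∈ B, (GLit.pos a ∈ I ∧ GLit.neg a ∉ I) ∨ (GLit.neg a ∈ I ∧ GLit.pos a ∉ I)

/-- `I` is a model of a ground program: whenever all body literals of a rule
    are true in `I`, some head atom is true in `I`. -/
def IsModelG (P : GProgram) (I : Set GLit) : Prop :=
  ∀ r ∈ P, (∀ l ∈ r.body, l ∈ I) → ∃ a ∈ r.head, GLit.pos a ∈ I

/-- The reduct `P^I`: delete rules containing a negative body literal `∼a`
    with `a ∈ I⁺`, and delete negative body literals from remaining rules. -/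
def reductG (P : GProgram) (I : Set GLit) : GProgram :=
  {r' | ∃ r ∈ P, (∀ a, GLit.neg a ∈ r.body → a ∉ plus I) ∧
        r' = ⟨r.head, r.body.filter GLit.isPos⟩}

/-- `I` is a stable model (answer set) of the non-ground program `π`. -/
def IsAnswerSet (π : Program) (I : Set GLit) : Prop :=
  IsInterp (herbrandB π) I ∧ IsModelG (groundProg π) I ∧
  ¬ ∃ J, IsInterp (herbrandB π) J ∧ IsModelG (reductG (groundProg π) I) J ∧
         plus J ⊂ plus I

/-- Positive edge of the dependency graph `DG_π`: from a predicate of a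
    positive body literal to a predicate of the head. -/
def posEdge (π : Program) (p q : ℕ) : Prop :=
  ∃ r ∈ π, (∃ a, Lit.pos a ∈ r.body ∧ a.pred = p) ∧ ∃ b ∈ r.head, b.pred = q

/-- Negative edge of the dependency graph `DG_π`: from a predicate of a
    negative body literal to a predicate of the head, or between (the
    predicates of) two distinct atom occurrences in a disjunctive head. -/
def negEdge (π : Program) (p q : ℕ) : Prop :=
  (∃ r ∈ π, (∃ a, Lit.neg a ∈ r.body ∧ a.pred = p) ∧ ∃ b ∈ r.head, b.pred = q) ∨
  (∃ r ∈ π, ∃ i j : Fin r.head.length, i ≠ j ∧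
      (r.head.get i).pred = p ∧ (r.head.get j).pred = q)

/-- Any edge of the dependency graph. -/
def edge (π : Program) (p q : ℕ) : Prop := posEdge π p q ∨ negEdge π p q

/-- `π` is stratified iff `DG_π` has no cycle containing a negative edge. -/
def Stratified (π : Program) : Prop :=
  ¬ ∃ p q, negEdge π p q ∧ Relation.ReflTransGen (edge π) q p

/-- `λ` is compilable w.r.t. `π`: `λ ⊆ π`, `λ` is stratified, and no predicate
    occurring in a head of `λ` occurs anywhere in `π ∖ λ`. -/
def Compilable (π lam : Program) : Prop :=
  lam ⊆ π ∧ Stratified lam ∧ ∀ p ∈ headPreds lam, p ∉ preds (π \ lam)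

/-- A ground atom viewed as a (non-ground) atom. -/
def GAtom.toAtom (a : GAtom) : Atom := ⟨a.pred, a.args.map Term.const⟩

/-- `{f. | f ∈ S}`: the program consisting of each atom of `S` as a fact. -/
def factsProg (S : Set GAtom) : Program :=
  {r | ∃ a ∈ S, r = ⟨[a.toAtom], []⟩}

/-- The atoms occurring in a ground rule (head or body). -/
def GRule.atoms (r : GRule) : Set GAtom :=
  {a | a ∈ r.head ∨ ∃ l ∈ r.body, l.atom = a}

/-- The Herbrand base of a ground program: the atoms occurring in it. -/
def gAtoms (P : GProgram) : Set GAtom :=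
  {a | ∃ r ∈ P, a ∈ r.atoms}

/-- `I` is a stable model of the ground program `P`. -/
def IsStableG (P : GProgram) (I : Set GLit) : Prop :=
  IsInterp (gAtoms P) I ∧ IsModelG P I ∧
  ¬ ∃ J, IsInterp (gAtoms P) J ∧ IsModelG (reductG P I) J ∧ plus J ⊂ plus I

/-- Positive edge of the dependency graph of a ground program. -/
def posEdgeG (P : GProgram) (p q : ℕ) : Prop :=
  ∃ r ∈ P, (∃ a, GLit.pos a ∈ r.body ∧ a.pred = p) ∧ ∃ b ∈ r.head, b.pred = q

/-- Negative edge of the dependency graph of a ground program. -/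
def negEdgeG (P : GProgram) (p q : ℕ) : Prop :=
  ∃ r ∈ P, (∃ a, GLit.neg a ∈ r.body ∧ a.pred = p) ∧ ∃ b ∈ r.head, b.pred = q

/-- A ground program is stratified iff its dependency graph has no cycle
    containing a negative edge. -/
def StratifiedG (P : GProgram) : Prop :=
  ¬ ∃ p q, negEdgeG P p q ∧
      Relation.ReflTransGen (fun x y => posEdgeG P x y ∨ negEdgeG P x y) q p

/-- `U` is a splitting set for `P`: every rule with a head atom in `U`
    has all of its atoms in `U`. -/
def splittingSet (P : GProgram) (U : Set GAtom) : Prop :=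
  ∀ r ∈ P, (∃ a ∈ r.head, a ∈ U) → ∀ a ∈ r.atoms, a ∈ U

/-- `b_U(P)`: the rules of `P` all of whose atoms are in `U`. -/
def bottomProg (P : GProgram) (U : Set GAtom) : GProgram :=
  {r | r ∈ P ∧ ∀ a ∈ r.atoms, a ∈ U}

open Classical in
/-- Remove from a list of ground literals those whose atom is in `U`. -/
noncomputable def removeU (U : Set GAtom) : List GLit → List GLit
  | [] => []
  | l :: ls => if l.atom ∈ U then removeU U ls else l :: removeU U ls

/-- `e_U(P, X)`: partial evaluation of `P` w.r.t. `U` and `X ⊆ U`: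
    delete every rule with a positive body literal over an atom of `U` not in
    `X`, or a negative body literal over an atom of `U` in `X`; delete all
    remaining body literals over atoms of `U` from the surviving rules. -/
def topEval (P : GProgram) (U X : Set GAtom) : GProgram :=
  {r' | ∃ r ∈ P,
    (∀ a, GLit.pos a ∈ r.body → a ∈ U → a ∈ X) ∧
    (∀ a, GLit.neg a ∈ r.body → a ∈ U → a ∉ X) ∧
    r' = ⟨r.head, removeU U r.body⟩}

end ASP

open ASP

namespace ASPProof
open ASP

/-! ### The level function from stratification -/

def lePred (π : Program) (p q : ℕ) : Prop := Relation.ReflTransGen (edge π) p q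

def ltPred (π : Program) (p q : ℕ) : Prop := lePred π p q ∧ ¬ lePred π q p

noncomputable def lam (π : Program) (p : ℕ) : ℕ :=
  Set.ncard {x | x ∈ preds π ∧ ltPred π x p}

lemma ruleAtoms_finite (r : Rule) : r.atoms.Finite := by
  apply Set.Finite.subset ((r.head.finite_toSet).union ((r.body.map Lit.atom).finite_toSet))
  rintro a (h | ⟨l, hl, rfl⟩)
  · exact Or.inl h
  · exact Or.inr (List.mem_map.2 ⟨l, hl, rfl⟩)

lemma preds_finite (π : Program) (hfin : π.Finite) : (preds π).Finite := by
  have hsub : preds π ⊆ ⋃ r ∈ π, Atom.pred '' r.atoms := by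
    rintro p ⟨r, hr, a, ha, rfl⟩
    exact Set.mem_biUnion hr ⟨a, ha, rfl⟩
  exact Set.Finite.subset (hfin.biUnion fun r _ => ((ruleAtoms_finite r).image _)) hsub

lemma ltSet_finite (π : Program) (hfin : π.Finite) (p : ℕ) :
    {x | x ∈ preds π ∧ ltPred π x p}.Finite :=
  (preds_finite π hfin).subset (fun x hx => hx.1)

lemma lam_mono (π : Program) (hfin : π.Finite) {p q : ℕ} (h : lePred π p q) :
    lam π p ≤ lam π q := by
  apply Set.ncard_le_ncard _ (ltSet_finite π hfin q)
  rintro x ⟨hx, h1, h2⟩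
  exact ⟨hx, h1.trans h, fun hqx => h2 (h.trans hqx)⟩

lemma negEdge_src_mem {π : Program} {p q : ℕ} (h : negEdge π p q) : p ∈ preds π := by
  rcases h with ⟨r, hr, ⟨a, ha, hp⟩, _⟩ | ⟨r, hr, i, j, _, hp, _⟩
  · exact ⟨r, hr, a, Or.inr ⟨.neg a, ha, rfl⟩, hp⟩
  · exact ⟨r, hr, r.head.get i, Or.inl (List.get_mem _ _), hp⟩

lemma lam_strict {π : Program} (hfin : π.Finite) (hstrat : Stratified π) {p q : ℕ}
    (h : negEdge π p q) : lam π p < lam π q := by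
  have hpq : lePred π p q := Relation.ReflTransGen.single (Or.inr h)
  have hqp : ¬ lePred π q p := fun hh => hstrat ⟨p, q, h, hh⟩
  apply Set.ncard_lt_ncard _ (ltSet_finite π hfin q)
  constructor
  · rintro x ⟨hx, h1, h2⟩
    exact ⟨hx, h1.trans hpq, fun hqx => h2 (hpq.trans hqx)⟩
  · intro hsub
    have hp : p ∈ {x | x ∈ preds π ∧ ltPred π x q} := ⟨negEdge_src_mem h, hpq, hqp⟩
    exact (hsub hp).2.2 Relation.ReflTransGen.refl

lemma head_short {π : Program} (hstrat : Stratified π) {r : Rule} (hr : r ∈ π) :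
    r.head.length ≤ 1 := by
  by_contra hlen
  push_neg at hlen
  have h01 : (0 : ℕ) < r.head.length := by omega
  have h11 : (1 : ℕ) < r.head.length := hlen
  have hij : (⟨0, h01⟩ : Fin r.head.length) ≠ ⟨1, h11⟩ := by
    intro hc
    have := congrArg Fin.val hc
    simp at this
  have e1 : negEdge π (r.head.get ⟨0, h01⟩).pred (r.head.get ⟨1, h11⟩).pred :=
    Or.inr ⟨r, hr, ⟨0, h01⟩, ⟨1, h11⟩, hij, rfl, rfl⟩
  have e2 : negEdge π (r.head.get ⟨1, h11⟩).pred (r.head.get ⟨0, h01⟩).pred :=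
    Or.inr ⟨r, hr, ⟨1, h11⟩, ⟨0, h01⟩, hij.symm, rfl, rfl⟩
  exact hstrat ⟨_, _, e1, Relation.ReflTransGen.single (Or.inr e2)⟩

end ASPProof

namespace ASPProof
open ASP

/-! ### Ground program facts -/

lemma lit_ground_atom (σ : ℕ → ℕ) (l : Lit) : (Lit.ground σ l).atom = Atom.ground σ l.atom := by
  cases l <;> rfl

lemma ground_rule_atoms {r : Rule} {σ : ℕ → ℕ} {a' : GAtom} (h : a' ∈ (Rule.ground σ r).atoms) :
    ∃ a ∈ r.atoms, a' = Atom.ground σ a := by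
  rcases h with h | ⟨l', hl', rfl⟩
  · rcases List.mem_map.1 h with ⟨a, ha, rfl⟩
    exact ⟨a, Or.inl ha, rfl⟩
  · rcases List.mem_map.1 hl' with ⟨l, hl, rfl⟩
    exact ⟨l.atom, Or.inr ⟨l, hl, rfl⟩, lit_ground_atom σ l⟩

lemma groundRule_atoms_in_B {π : Program} {gr : GRule} (hgr : gr ∈ groundProg π)
    {a' : GAtom} (ha' : a' ∈ gr.atoms) : a' ∈ herbrandB π := by
  rcases hgr with ⟨r, hr, σ, hσ, rfl⟩
  rcases ground_rule_atoms ha' with ⟨a, ha, rfl⟩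
  refine ⟨⟨r, hr, a, ha, rfl⟩, ?_⟩
  intro c hc
  rcases List.mem_map.1 hc with ⟨t, ht, rfl⟩
  cases t with
  | var v => exact hσ v ⟨a, ha, ht⟩
  | const c => exact ⟨r, hr, a, ha, ht⟩

lemma groundRule_head_short {π : Program} (hstrat : Stratified π) {gr : GRule}
    (hgr : gr ∈ groundProg π) : gr.head.length ≤ 1 := by
  rcases hgr with ⟨r, hr, σ, _, rfl⟩
  simpa [Rule.ground] using head_short hstrat hr

lemma eq_of_mem_short {α : Type*} {l : List α} {a b : α} (h : l.length ≤ 1)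
    (ha : a ∈ l) (hb : b ∈ l) : a = b := by
  match l with
  | [] => exact absurd ha List.not_mem_nil
  | [x] => rw [List.mem_singleton] at ha hb; rw [ha, hb]
  | x :: y :: t => simp at h

lemma ground_pos_edge {π : Program} {gr : GRule} (hgr : gr ∈ groundProg π) {h a : GAtom}
    (hh : h ∈ gr.head) (ha : GLit.pos a ∈ gr.body) : posEdge π a.pred h.pred := by
  rcases hgr with ⟨r, hr, σ, _, rfl⟩
  rcases List.mem_map.1 hh with ⟨b, hb, rfl⟩
  rcases List.mem_map.1 ha with ⟨l, hl, hla⟩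
  cases l with
  | pos a0 =>
    simp only [Lit.ground] at hla
    cases hla
    exact ⟨r, hr, ⟨a0, hl, rfl⟩, b, hb, rfl⟩
  | neg a0 => simp [Lit.ground] at hla

lemma ground_neg_edge {π : Program} {gr : GRule} (hgr : gr ∈ groundProg π) {h a : GAtom}
    (hh : h ∈ gr.head) (ha : GLit.neg a ∈ gr.body) : negEdge π a.pred h.pred := by
  rcases hgr with ⟨r, hr, σ, _, rfl⟩
  rcases List.mem_map.1 hh with ⟨b, hb, rfl⟩
  rcases List.mem_map.1 ha with ⟨l, hl, hla⟩
  cases l with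
  | neg a0 =>
    simp only [Lit.ground] at hla
    cases hla
    exact Or.inl ⟨r, hr, ⟨a0, hl, rfl⟩, b, hb, rfl⟩
  | pos a0 => simp [Lit.ground] at hla

/-! ### The immediate-consequence operator of the reduct -/

def Tset (P : GProgram) (Mp : Set GAtom) (X : Set GAtom) : Set GAtom :=
  {h | ∃ r ∈ P, h ∈ r.head ∧ (∀ a, GLit.neg a ∈ r.body → a ∉ Mp) ∧
       ∀ a, GLit.pos a ∈ r.body → a ∈ X}

def Top (P : GProgram) (Mp : Set GAtom) : Set GAtom →o Set GAtom :=
  ⟨Tset P Mp, by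
    rintro X Y hXY h ⟨r, hr, hh, hneg, hpos⟩
    exact ⟨r, hr, hh, hneg, fun a ha => hXY (hpos a ha)⟩⟩

/-- The stratum-bounded operator. -/
def TopK (π : Program) (P : GProgram) (k : ℕ) (Mp : Set GAtom) : Set GAtom →o Set GAtom :=
  ⟨fun X => {h | lam π h.pred ≤ k ∧ h ∈ Tset P Mp X}, by
    rintro X Y hXY h ⟨hk, hT⟩
    exact ⟨hk, (Top P Mp).monotone hXY hT⟩⟩

/-! ### Canonical interpretation from a set of atoms -/

def interpOf (B L : Set GAtom) : Set GLit :=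
  {l | ∃ a, (l = GLit.pos a ∧ a ∈ L) ∨ (l = GLit.neg a ∧ a ∈ B ∧ a ∉ L)}

@[simp] lemma pos_mem_interpOf {B L : Set GAtom} {a : GAtom} :
    GLit.pos a ∈ interpOf B L ↔ a ∈ L := by simp [interpOf]

@[simp] lemma neg_mem_interpOf {B L : Set GAtom} {a : GAtom} :
    GLit.neg a ∈ interpOf B L ↔ a ∈ B ∧ a ∉ L := by simp [interpOf]

lemma plus_interpOf (B L : Set GAtom) : plus (interpOf B L) = L := by
  ext a; simp [plus]

lemma isInterp_interpOf {B L : Set GAtom} (hL : L ⊆ B) : IsInterp B (interpOf B L) := by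
  constructor
  · rintro l ⟨a, ⟨rfl, ha⟩ | ⟨rfl, ha, _⟩⟩
    · exact hL ha
    · exact ha
  · intro a haB
    by_cases h : a ∈ L
    · exact Or.inl ⟨pos_mem_interpOf.2 h, fun hn => (neg_mem_interpOf.1 hn).2 h⟩
    · exact Or.inr ⟨neg_mem_interpOf.2 ⟨haB, h⟩, fun hp => h (pos_mem_interpOf.1 hp)⟩

end ASPProof

namespace ASPProof
open ASP

lemma answerSet_plus_eq_lfp {π : Program} (hstrat : Stratified π) {M : Set GLit}
    (hM : IsAnswerSet π M) :
    plus M = OrderHom.lfp (Top (groundProg π) (plus M)) := by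
  set P := groundProg π with hP
  set L := OrderHom.lfp (Top P (plus M)) with hLdef
  have hpre : Tset P (plus M) (plus M) ⊆ plus M := by
    rintro h ⟨r, hr, hh, hneg, hpos⟩
    have hbody : ∀ l ∈ r.body, l ∈ M := by
      intro l hl
      cases l with
      | pos a => exact hpos a hl
      | neg a =>
        have haB : a ∈ herbrandB π := groundRule_atoms_in_B hr (Or.inr ⟨_, hl, rfl⟩)
        rcases hM.1.2 a haB with ⟨hp, _⟩ | ⟨hn, _⟩
        · exact absurd hp (hneg a hl)
        · exact hn
    rcases hM.2.1 r hr hbody with ⟨b, hb, hbM⟩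
    rwa [eq_of_mem_short (groundRule_head_short hstrat hr) hh hb]
  have hLM : L ⊆ plus M := OrderHom.lfp_le _ hpre
  have hLB : L ⊆ herbrandB π := fun a ha => hM.1.1 _ (hLM ha)
  have hmodel : IsModelG (reductG P M) (interpOf (herbrandB π) L) := by
    rintro r' ⟨r, hr, hneg, rfl⟩ hbody
    have hpos : ∀ a, GLit.pos a ∈ r.body → a ∈ L := by
      intro a ha
      have hmem : GLit.pos a ∈ (⟨r.head, r.body.filter GLit.isPos⟩ : GRule).body :=
        List.mem_filter.2 ⟨ha, rfl⟩
      exact pos_mem_interpOf.1 (hbody _ hmem)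
    cases hhead : r.head with
    | nil =>
      exfalso
      have hbodyM : ∀ l ∈ r.body, l ∈ M := by
        intro l hl
        cases l with
        | pos a => exact hLM (hpos a hl)
        | neg a =>
          have haB : a ∈ herbrandB π := groundRule_atoms_in_B hr (Or.inr ⟨_, hl, rfl⟩)
          rcases hM.1.2 a haB with ⟨hp, _⟩ | ⟨hn, _⟩
          · exact absurd hp (hneg a hl)
          · exact hn
      rcases hM.2.1 r hr hbodyM with ⟨b, hb, _⟩
      rw [hhead] at hb
      exact absurd hb List.not_mem_nil
    | cons h t =>
      have hhm : h ∈ r.head := by rw [hhead]; exact List.mem_cons_self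
      have hT : h ∈ Tset P (plus M) L := ⟨r, hr, hhm, hneg, hpos⟩
      have hhL : h ∈ L := by
        have := (Top P (plus M)).map_lfp
        rw [hLdef]
        rw [← this]
        exact hT
      exact ⟨h, List.mem_cons_self, pos_mem_interpOf.2 hhL⟩
  have heq : L = plus M := by
    by_contra hne
    exact hM.2.2 ⟨interpOf (herbrandB π) L, isInterp_interpOf hLB, hmodel,
      by rw [plus_interpOf]; exact hLM.ssubset_of_ne hne⟩
  exact heq.symm

end ASPProof

namespace ASPProof
open ASP

lemma lfp_inter_strata (π : Program) (hfin : π.Finite) (Mp : Set GAtom) (k : ℕ) :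
    OrderHom.lfp (Top (groundProg π) Mp) ∩ {a | lam π a.pred ≤ k}
      = OrderHom.lfp (TopK π (groundProg π) k Mp) := by
  set P := groundProg π with hP
  set L := OrderHom.lfp (Top P Mp) with hL
  set K := OrderHom.lfp (TopK π P k Mp) with hK
  have hKL : K ≤ L := by
    apply OrderHom.lfp_le
    rintro h ⟨_, hT⟩
    rw [hL, ← (Top P Mp).map_lfp]
    exact hT
  have hKS : K ≤ {a | lam π a.pred ≤ k} := by
    apply OrderHom.lfp_le
    rintro h ⟨hk, _⟩
    exact hk
  apply Set.Subset.antisymm _ (le_inf hKL hKS)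
  have hX : L ⊆ K ∪ (L \ {a | lam π a.pred ≤ k}) := by
    rw [hL]
    apply OrderHom.lfp_le
    rintro h ⟨r, hr, hh, hneg, hpos⟩
    have hposL : ∀ a, GLit.pos a ∈ r.body → a ∈ L := by
      intro a ha
      rcases hpos a ha with hK' | hL'
      · exact hKL hK'
      · exact hL'.1
    have hhL : h ∈ L := by
      rw [hL, ← (Top P Mp).map_lfp]
      exact ⟨r, hr, hh, hneg, hposL⟩
    by_cases hk : lam π h.pred ≤ k
    · left
      have hposK : ∀ a, GLit.pos a ∈ r.body → a ∈ K := by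
        intro a ha
        have hak : lam π a.pred ≤ k :=
          le_trans (lam_mono π hfin (Relation.ReflTransGen.single
            (Or.inl (ground_pos_edge hr hh ha)))) hk
        rcases hpos a ha with hK' | hL'
        · exact hK'
        · exact absurd hak hL'.2
      rw [hK, ← (TopK π P k Mp).map_lfp]
      exact ⟨hk, r, hr, hh, hneg, hposK⟩
    · exact Or.inr ⟨hhL, hk⟩
  rintro a ⟨haL, hak⟩
  rcases hX haL with h | h
  · exact h
  · exact absurd hak h.2

end ASPProof

namespace ASPProof
open ASP

lemma interp_sub_of_plus_eq {B : Set GAtom} {I J : Set GLit} (hI : IsInterp B I)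
    (hJ : IsInterp B J) (h : plus I = plus J) : I ⊆ J := by
  intro l hl
  cases l with
  | pos a =>
    have : a ∈ plus I := hl
    rw [h] at this
    exact this
  | neg a =>
    have haB : a ∈ B := hI.1 _ hl
    have hpI : GLit.pos a ∉ I := by
      rcases hI.2 a haB with ⟨_, hn⟩ | ⟨_, hp⟩
      · exact absurd hl hn
      · exact hp
    have hpJ : a ∉ plus J := by rw [← h]; exact hpI
    rcases hJ.2 a haB with ⟨hp, _⟩ | ⟨hn, _⟩
    · exact absurd hp hpJ
    · exact hn

end ASPProof

open ASPProof in
/-- every stratified ASP program (possibly including constraints)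
admits at most one answer set. -/
theorem statement3 (π : Program) (hfin : π.Finite)
    (hrules : ∀ r ∈ π, r.head ≠ [] ∨ r.body ≠ [])
    (hstrat : Stratified π)
    (M N : Set GLit) (hM : IsAnswerSet π M) (hN : IsAnswerSet π N) :
    M = N := by
  set P := groundProg π with hP
  have hLM := answerSet_plus_eq_lfp hstrat hM
  have hLN := answerSet_plus_eq_lfp hstrat hN
  have key : ∀ k : ℕ, ∀ a : GAtom, lam π a.pred ≤ k → (a ∈ plus M ↔ a ∈ plus N) := by
    intro k
    induction k using Nat.strong_induction_on with
    | _ k IH =>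
    have IH' : ∀ a : GAtom, lam π a.pred < k → (a ∈ plus M ↔ a ∈ plus N) :=
      fun a h => IH _ h a le_rfl
    -- the stratum-bounded operators agree
    have hTeq : ∀ X : Set GAtom, TopK π P k (plus M) X = TopK π P k (plus N) X := by
      intro X
      have main : ∀ (A B : Set GLit), (∀ a : GAtom, lam π a.pred < k →
          (a ∈ plus A ↔ a ∈ plus B)) →
          (TopK π P k (plus A) X : Set GAtom) ⊆ TopK π P k (plus B) X := by
        rintro A B hAB h ⟨hk, r, hr, hh, hneg, hpos⟩
        refine ⟨hk, r, hr, hh, ?_, hpos⟩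
        intro a ha haB
        have hlt : lam π a.pred < k :=
          lt_of_lt_of_le (lam_strict hfin hstrat (ground_neg_edge hr hh ha)) hk
        exact hneg a ha ((hAB a hlt).2 haB)
      exact Set.Subset.antisymm (main M N IH') (main N M fun a h => (IH' a h).symm)
    have hlfp : OrderHom.lfp (TopK π P k (plus M)) = OrderHom.lfp (TopK π P k (plus N)) := by
      apply le_antisymm
      · apply OrderHom.lfp_le
        rw [hTeq]
        exact le_of_eq (TopK π P k (plus N)).map_lfp
      · apply OrderHom.lfp_le
        rw [← hTeq]
        exact le_of_eq (TopK π P k (plus M)).map_lfp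
    intro a hak
    have h1 := lfp_inter_strata π hfin (plus M) k
    have h2 := lfp_inter_strata π hfin (plus N) k
    rw [← hLM] at h1
    rw [← hLN] at h2
    constructor
    · intro haM
      have : a ∈ plus M ∩ {a | lam π a.pred ≤ k} := ⟨haM, hak⟩
      rw [h1, hlfp, ← h2] at this
      exact this.1
    · intro haN
      have : a ∈ plus N ∩ {a | lam π a.pred ≤ k} := ⟨haN, hak⟩
      rw [h2, ← hlfp, ← h1] at this
      exact this.1
  have hplus : plus M = plus N := by
    ext a
    exact key (lam π a.pred) a le_rfl
  exact Set.Subset.antisymm (interp_sub_of_plus_eq hM.1 hN.1 hplus)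
    (interp_sub_of_plus_eq hN.1 hM.1 hplus.symm)
end

section
/- Every ground normal ASP program without constraints (every rule has exactly one head atom) that is stratified has exactly one stable model. -/
open ASP

namespace S4
open ASP

/-! ### Set-level reformulation for normal programs -/

def posb (r : GRule) : Set GAtom := {b | GLit.pos b ∈ r.body}
def negb (r : GRule) : Set GAtom := {b | GLit.neg b ∈ r.body}

def modelSet (P : GProgram) (M : Set GAtom) : Prop :=
  ∀ r ∈ P, (∀ b ∈ posb r, b ∈ M) → (∀ b ∈ negb r, b ∉ M) → ∃ a ∈ r.head, a ∈ M

def rmodel (P : GProgram) (M N : Set GAtom) : Prop :=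
  ∀ r ∈ P, (∀ b ∈ negb r, b ∉ M) → (∀ b ∈ posb r, b ∈ N) → ∃ a ∈ r.head, a ∈ N

def SS (P : GProgram) (M : Set GAtom) : Prop :=
  M ⊆ gAtoms P ∧ modelSet P M ∧ ∀ N, N ⊆ gAtoms P → rmodel P M N → ¬ N ⊂ M

lemma head_mem_gAtoms {P : GProgram} {r : GRule} (hr : r ∈ P) {h : GAtom}
    (hh : h ∈ r.head) : h ∈ gAtoms P := ⟨r, hr, Or.inl hh⟩

lemma body_mem_gAtoms {P : GProgram} {r : GRule} (hr : r ∈ P) {l : GLit}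
    (hl : l ∈ r.body) : l.atom ∈ gAtoms P := ⟨r, hr, Or.inr ⟨l, hl, rfl⟩⟩

/-! ### Ranks from stratification -/

def EdgeR (P : GProgram) (p q : ℕ) : Prop := posEdgeG P p q ∨ negEdgeG P p q

def Above (P : GProgram) (q x : ℕ) : Prop :=
  ∃ a b, negEdgeG P a b ∧ Relation.ReflTransGen (EdgeR P) x a ∧
    Relation.ReflTransGen (EdgeR P) b q

noncomputable def rk (P : GProgram) (p : ℕ) : ℕ := {x | Above P p x}.ncard

noncomputable def rka (P : GProgram) (a : GAtom) : ℕ := rk P a.pred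

def bodyPreds (P : GProgram) : Set ℕ := {p | ∃ r ∈ P, ∃ l ∈ r.body, l.atom.pred = p}

lemma bodyPreds_finite {P : GProgram} (hfin : P.Finite) : (bodyPreds P).Finite := by
  have h : bodyPreds P ⊆ ⋃ r ∈ P, (fun l : GLit => l.atom.pred) '' {l | l ∈ r.body} := by
    rintro p ⟨r, hr, l, hl, rfl⟩
    exact Set.mem_biUnion hr ⟨l, hl, rfl⟩
  exact Set.Finite.subset (hfin.biUnion fun r _ => r.body.finite_toSet.image _) h

lemma above_sub {P : GProgram} (q : ℕ) : {x | Above P q x} ⊆ bodyPreds P := by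
  rintro x ⟨a, b, hn, hxa, _⟩
  rcases Relation.ReflTransGen.cases_head hxa with rfl | ⟨c, hc, _⟩
  · obtain ⟨r, hr, ⟨a', ha', rfl⟩, _⟩ := hn
    exact ⟨r, hr, GLit.neg a', ha', rfl⟩
  · rcases hc with ⟨r, hr, ⟨a', ha', rfl⟩, _⟩ | ⟨r, hr, ⟨a', ha', rfl⟩, _⟩
    · exact ⟨r, hr, GLit.pos a', ha', rfl⟩
    · exact ⟨r, hr, GLit.neg a', ha', rfl⟩

lemma above_fin {P : GProgram} (hfin : P.Finite) (q : ℕ) : {x | Above P q x}.Finite :=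
  (bodyPreds_finite hfin).subset (above_sub q)

lemma above_mono {P : GProgram} {p q x : ℕ} (e : EdgeR P p q) (h : Above P p x) :
    Above P q x := by
  obtain ⟨a, b, hn, hxa, hbp⟩ := h
  exact ⟨a, b, hn, hxa, hbp.tail e⟩

lemma rk_le {P : GProgram} (hfin : P.Finite) {p q : ℕ} (e : EdgeR P p q) :
    rk P p ≤ rk P q :=
  Set.ncard_le_ncard (fun x hx => above_mono e hx) (above_fin hfin q)

lemma rk_lt {P : GProgram} (hfin : P.Finite) (hstrat : StratifiedG P) {p q : ℕ}
    (e : negEdgeG P p q) : rk P p < rk P q := by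
  refine Set.ncard_lt_ncard ?_ (above_fin hfin q)
  refine ⟨fun x hx => above_mono (Or.inr e) hx, fun hsub => ?_⟩
  have hpq : Above P q p := ⟨p, q, e, Relation.ReflTransGen.refl, Relation.ReflTransGen.refl⟩
  obtain ⟨a, b, hn, hpa, hbp⟩ := hsub hpq
  exact hstrat ⟨a, b, hn, hbp.trans hpa⟩

lemma rka_pos_le {P : GProgram} (hfin : P.Finite) {r : GRule} (hr : r ∈ P) {b h : GAtom}
    (hb : b ∈ posb r) (hh : h ∈ r.head) : rka P b ≤ rka P h :=
  rk_le hfin (Or.inl ⟨r, hr, ⟨b, hb, rfl⟩, ⟨h, hh, rfl⟩⟩)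

lemma rka_neg_lt {P : GProgram} (hfin : P.Finite) (hstrat : StratifiedG P) {r : GRule}
    (hr : r ∈ P) {b h : GAtom} (hb : b ∈ negb r) (hh : h ∈ r.head) :
    rka P b < rka P h :=
  rk_lt hfin hstrat ⟨r, hr, ⟨b, hb, rfl⟩, ⟨h, hh, rfl⟩⟩

/-! ### The iterated fixpoint construction -/

def Fam (P : GProgram) (C : Set GAtom) (n : ℕ) : Set (Set GAtom) :=
  {N | C ⊆ N ∧ (∀ a ∈ N, a ∉ C → a ∈ gAtoms P ∧ rka P a = n) ∧
    ∀ r ∈ P, ∀ h, r.head = [h] → rka P h = n →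
      (∀ b ∈ posb r, b ∈ N) → (∀ b ∈ negb r, b ∉ C) → h ∈ N}

lemma top_mem_Fam (P : GProgram) (C : Set GAtom) (n : ℕ)
    (hC : ∀ a ∈ C, a ∈ gAtoms P) :
    (C ∪ {a | a ∈ gAtoms P ∧ rka P a = n}) ∈ Fam P C n := by
  refine ⟨Set.subset_union_left, ?_, ?_⟩
  · rintro a (ha | ha) hnc
    · exact absurd ha hnc
    · exact ha
  · intro r hr h hhd hrk _ _
    refine Or.inr ⟨head_mem_gAtoms hr ?_, hrk⟩
    rw [hhd]; exact List.mem_singleton_self h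

lemma sInter_mem_Fam (P : GProgram) (C : Set GAtom) (n : ℕ)
    (hC : ∀ a ∈ C, a ∈ gAtoms P) : ⋂₀ Fam P C n ∈ Fam P C n := by
  refine ⟨?_, ?_, ?_⟩
  · intro a ha
    exact Set.mem_sInter.mpr fun N hN => hN.1 ha
  · intro a ha hnc
    exact (top_mem_Fam P C n hC).2.1 a (ha _ (top_mem_Fam P C n hC)) hnc
  · intro r hr h hhd hrk hpos hneg
    refine Set.mem_sInter.mpr fun N hN => ?_
    exact hN.2.2 r hr h hhd hrk (fun b hb => (hpos b hb) N hN) hneg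

noncomputable def Mstep (P : GProgram) : ℕ → Set GAtom
  | 0 => ∅
  | n + 1 => ⋂₀ Fam P (Mstep P n) n

lemma Mstep_spec {P : GProgram} : ∀ n, ∀ a ∈ Mstep P n, a ∈ gAtoms P ∧ rka P a < n := by
  intro n
  induction n with
  | zero => intro a ha; exact absurd ha (Set.notMem_empty a)
  | succ n ih =>
    intro a ha
    have hmem := sInter_mem_Fam P (Mstep P n) n (fun b hb => (ih b hb).1)
    by_cases hc : a ∈ Mstep P n
    · exact ⟨(ih a hc).1, Nat.lt_succ_of_lt (ih a hc).2⟩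
    · obtain ⟨hB, hrk⟩ := hmem.2.1 a ha hc
      exact ⟨hB, by omega⟩

lemma Mstep_in_Fam (P : GProgram) (n : ℕ) : Mstep P (n + 1) ∈ Fam P (Mstep P n) n :=
  sInter_mem_Fam P (Mstep P n) n (fun b hb => (Mstep_spec n b hb).1)

lemma Mstep_mono {P : GProgram} {m n : ℕ} (h : m ≤ n) : Mstep P m ⊆ Mstep P n := by
  induction h with
  | refl => exact Set.Subset.rfl
  | step h ih => exact ih.trans (Mstep_in_Fam P _).1

def MM (P : GProgram) : Set GAtom := {a | ∃ n, a ∈ Mstep P n}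

lemma MM_sub {P : GProgram} : MM P ⊆ gAtoms P := by
  rintro a ⟨n, ha⟩; exact (Mstep_spec n a ha).1

lemma mem_MM_step {P : GProgram} {a : GAtom} (h : a ∈ MM P) :
    a ∈ Mstep P (rka P a + 1) := by
  obtain ⟨n, hn⟩ := h
  induction n with
  | zero => exact absurd hn (Set.notMem_empty a)
  | succ n ih =>
    by_cases hc : a ∈ Mstep P n
    · exact ih hc
    · have := (Mstep_in_Fam P n).2.1 a hn hc
      rw [this.2]; exact hn

lemma MM_low {P : GProgram} {a : GAtom} {n : ℕ} (h : a ∈ MM P) (hlt : rka P a < n) :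
    a ∈ Mstep P n := Mstep_mono (by omega) (mem_MM_step h)

lemma Mstep_sub_MM {P : GProgram} (n : ℕ) : Mstep P n ⊆ MM P := fun a ha => ⟨n, ha⟩

lemma MM_model {P : GProgram} (hfin : P.Finite)
    (hnormal : ∀ r ∈ P, r.head.length = 1) : modelSet P (MM P) := by
  intro r hr hpos hneg
  obtain ⟨h, hhd⟩ := List.length_eq_one_iff.mp (hnormal r hr)
  have hh : h ∈ r.head := by rw [hhd]; exact List.mem_singleton_self h
  refine ⟨h, hh, ?_⟩
  set n := rka P h with hn
  have hstep : h ∈ Mstep P (n + 1) := by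
    refine (Mstep_in_Fam P n).2.2 r hr h hhd rfl ?_ ?_
    · intro b hb
      exact MM_low (hpos b hb) (Nat.lt_succ_of_le (rka_pos_le hfin hr hb hh))
    · intro b hb hbM
      exact hneg b hb (Mstep_sub_MM n hbM)
  exact ⟨n + 1, hstep⟩

lemma MM_least {P : GProgram} (hfin : P.Finite) (hstrat : StratifiedG P)
    {N : Set GAtom} (hNB : N ⊆ gAtoms P) (hN : rmodel P (MM P) N) : MM P ⊆ N := by
  suffices hs : ∀ n, Mstep P n ⊆ N by rintro a ⟨n, ha⟩; exact hs n ha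
  intro n
  induction n with
  | zero => intro a ha; exact absurd ha (Set.notMem_empty a)
  | succ n ih =>
    have hK : (Mstep P n ∪ (N ∩ {a | a ∈ gAtoms P ∧ rka P a = n})) ∈
        Fam P (Mstep P n) n := by
      refine ⟨Set.subset_union_left, ?_, ?_⟩
      · rintro a (ha | ha) hnc
        · exact absurd ha hnc
        · exact ha.2
      · intro r hr h hhd hrk hpos hneg
        have hh : h ∈ r.head := by rw [hhd]; exact List.mem_singleton_self h
        have hhN : h ∈ N := by
          have hnegc : ∀ b ∈ negb r, b ∉ MM P := by
            intro b hb hbM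
            have hblt : rka P b < n := hrk ▸ rka_neg_lt hfin hstrat hr hb hh
            exact hneg b hb (MM_low hbM hblt)
          have hposc : ∀ b ∈ posb r, b ∈ N := by
            intro b hb
            rcases hpos b hb with hb' | hb'
            · exact ih hb'
            · exact hb'.1
          obtain ⟨a, ha, haN⟩ := hN r hr hnegc hposc
          rw [hhd] at ha
          rwa [List.mem_singleton.mp ha] at haN
        exact Or.inr ⟨hhN, head_mem_gAtoms hr hh, hrk⟩
    intro a ha
    rcases Set.sInter_subset_of_mem hK ha with ha' | ha'
    · exact ih ha'
    · exact ha'.1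

lemma MM_SS {P : GProgram} (hfin : P.Finite) (hnormal : ∀ r ∈ P, r.head.length = 1)
    (hstrat : StratifiedG P) : SS P (MM P) := by
  refine ⟨MM_sub, MM_model hfin hnormal, ?_⟩
  intro N hNB hN hss
  exact hss.2 (MM_least hfin hstrat hNB hN)

/-! ### Uniqueness -/

lemma SS_rmodel_self {P : GProgram} {M : Set GAtom} (hM : SS P M) : rmodel P M M :=
  fun r hr hneg hpos => hM.2.1 r hr hpos hneg

lemma SS_least {P : GProgram} (hnormal : ∀ r ∈ P, r.head.length = 1) {M : Set GAtom}
    (hM : SS P M) {N : Set GAtom} (hNB : N ⊆ gAtoms P) (hN : rmodel P M N) :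
    M ⊆ N := by
  have hint : rmodel P M (N ∩ M) := by
    intro r hr hneg hpos
    obtain ⟨h, hhd⟩ := List.length_eq_one_iff.mp (hnormal r hr)
    have hh : h ∈ r.head := by rw [hhd]; exact List.mem_singleton_self h
    refine ⟨h, hh, ?_, ?_⟩
    · obtain ⟨a, ha, haN⟩ := hN r hr hneg (fun b hb => (hpos b hb).1)
      rw [hhd] at ha; rwa [List.mem_singleton.mp ha] at haN
    · obtain ⟨a, ha, haM⟩ := SS_rmodel_self hM r hr hneg (fun b hb => (hpos b hb).2)
      rw [hhd] at ha; rwa [List.mem_singleton.mp ha] at haM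
  have hne : N ∩ M = M := by
    by_contra hne
    exact hM.2.2 (N ∩ M) (fun a ha => hM.1 ha.2) hint
      (Set.ssubset_iff_subset_ne.mpr ⟨Set.inter_subset_right, hne⟩)
  intro a ha
  rw [← hne] at ha
  exact ha.1

lemma SS_unique {P : GProgram} (hfin : P.Finite)
    (hnormal : ∀ r ∈ P, r.head.length = 1) (hstrat : StratifiedG P)
    {M' : Set GAtom} (hM' : SS P M') : M' = MM P := by
  have key : ∀ n, ∀ a : GAtom, rka P a < n → (a ∈ MM P ↔ a ∈ M') := by
    intro n
    induction n with
    | zero => intro a ha; omega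
    | succ n ih =>
      have sub1 : ∀ a : GAtom, rka P a < n + 1 → a ∈ MM P → a ∈ M' := by
        intro a hlt haM
        rcases Nat.lt_succ_iff_lt_or_eq.mp hlt with hlt' | heq
        · exact (ih a hlt').mp haM
        · have hNstar : (Mstep P n ∪ (M' ∩ {x | x ∈ gAtoms P ∧ rka P x = n})) ∈
              Fam P (Mstep P n) n := by
            refine ⟨Set.subset_union_left, ?_, ?_⟩
            · rintro x (hx | hx) hnc
              · exact absurd hx hnc
              · exact hx.2
            · intro r hr h hhd hrk hpos hneg
              have hh : h ∈ r.head := by rw [hhd]; exact List.mem_singleton_self h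
              have hhM' : h ∈ M' := by
                have hnegc : ∀ b ∈ negb r, b ∉ M' := by
                  intro b hb hbM'
                  have hblt : rka P b < n := hrk ▸ rka_neg_lt hfin hstrat hr hb hh
                  have hbMM : b ∈ MM P := (ih b hblt).mpr hbM'
                  exact hneg b hb (MM_low hbMM hblt)
                have hposc : ∀ b ∈ posb r, b ∈ M' := by
                  intro b hb
                  rcases hpos b hb with hb' | hb'
                  · exact (ih b (Mstep_spec n b hb').2).mp (Mstep_sub_MM n hb')
                  · exact hb'.1
                obtain ⟨a', ha', haM'⟩ := SS_rmodel_self hM' r hr hnegc hposc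
                rw [hhd] at ha'; rwa [List.mem_singleton.mp ha'] at haM'
              exact Or.inr ⟨hhM', head_mem_gAtoms hr hh, hrk⟩
          have hstep : a ∈ Mstep P (n + 1) := MM_low haM (by omega)
          rcases Set.sInter_subset_of_mem hNstar hstep with ha' | ha'
          · exact absurd (Mstep_spec n a ha').2 (by omega)
          · exact ha'.1
      have sub2 : ∀ a : GAtom, rka P a < n + 1 → a ∈ M' → a ∈ MM P := by
        intro a hlt haM'
        rcases Nat.lt_succ_iff_lt_or_eq.mp hlt with hlt' | heq
        · exact (ih a hlt').mpr haM'
        · set K := (M' ∩ {x | n < rka P x}) ∪ (MM P ∩ {x | rka P x ≤ n}) with hKdef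
          have hKB : K ⊆ gAtoms P := by
            rintro x (hx | hx)
            · exact hM'.1 hx.1
            · exact MM_sub hx.1
          have hK : rmodel P M' K := by
            intro r hr hneg hpos
            obtain ⟨h, hhd⟩ := List.length_eq_one_iff.mp (hnormal r hr)
            have hh : h ∈ r.head := by rw [hhd]; exact List.mem_singleton_self h
            refine ⟨h, hh, ?_⟩
            by_cases hc : rka P h ≤ n
            · have hhMM : h ∈ MM P := by
                have hposc : ∀ b ∈ posb r, b ∈ MM P := by
                  intro b hb
                  rcases hpos b hb with hb' | hb'
                  · have h2 : n < rka P b := hb'.2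
                    exact absurd (rka_pos_le hfin hr hb hh) (by omega)
                  · exact hb'.1
                have hnegc : ∀ b ∈ negb r, b ∉ MM P := by
                  intro b hb hbMM
                  have hblt : rka P b < n + 1 :=
                    Nat.lt_succ_of_le ((rka_neg_lt hfin hstrat hr hb hh).le.trans hc)
                  exact hneg b hb (sub1 b hblt hbMM)
                obtain ⟨a', ha', haMM⟩ := MM_model hfin hnormal r hr hposc hnegc
                rw [hhd] at ha'; rwa [List.mem_singleton.mp ha'] at haMM
              exact Or.inr ⟨hhMM, hc⟩
            · have hposM' : ∀ b ∈ posb r, b ∈ M' := by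
                intro b hb
                rcases hpos b hb with hb' | hb'
                · exact hb'.1
                · exact sub1 b (Nat.lt_succ_of_le hb'.2) hb'.1
              obtain ⟨a', ha', haM'⟩ := SS_rmodel_self hM' r hr hneg hposM'
              rw [hhd] at ha'
              rw [List.mem_singleton.mp ha'] at haM'
              exact Or.inl ⟨haM', (by omega : n < rka P h)⟩
          have hle := SS_least hnormal hM' hKB hK
          rcases hle haM' with ha' | ha'
          · exact absurd ((ha'.2 : n < rka P a).trans_eq heq) (lt_irrefl n)
          · exact ha'.1
      exact fun a hlt => ⟨sub1 a hlt, sub2 a hlt⟩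
  ext a
  exact (key (rka P a + 1) a (Nat.lt_succ_self _)).symm

/-! ### Bridge between literal-level and set-level notions -/

def toI (Bs M : Set GAtom) : Set GLit :=
  {l | (∃ a ∈ M, l = GLit.pos a) ∨ ∃ a, a ∈ Bs ∧ a ∉ M ∧ l = GLit.neg a}

lemma pos_mem_toI {Bs M : Set GAtom} {a : GAtom} :
    GLit.pos a ∈ toI Bs M ↔ a ∈ M := by
  simp [toI]

lemma neg_mem_toI {Bs M : Set GAtom} {a : GAtom} :
    GLit.neg a ∈ toI Bs M ↔ a ∈ Bs ∧ a ∉ M := by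
  simp [toI]

lemma plus_toI (Bs M : Set GAtom) : plus (toI Bs M) = M := by
  ext a; exact pos_mem_toI

lemma interp_toI {Bs M : Set GAtom} (hM : M ⊆ Bs) : IsInterp Bs (toI Bs M) := by
  constructor
  · rintro l (⟨a, ha, rfl⟩ | ⟨a, haB, _, rfl⟩)
    · exact hM ha
    · exact haB
  · intro a haB
    by_cases hc : a ∈ M
    · exact Or.inl ⟨pos_mem_toI.mpr hc, fun hneg => (neg_mem_toI.mp hneg).2 hc⟩
    · exact Or.inr ⟨neg_mem_toI.mpr ⟨haB, hc⟩, fun hpos => hc (pos_mem_toI.mp hpos)⟩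

lemma interp_plus_sub {Bs : Set GAtom} {I : Set GLit} (h : IsInterp Bs I) :
    plus I ⊆ Bs := fun a ha => h.1 (GLit.pos a) ha

lemma interp_neg_mem {Bs : Set GAtom} {I : Set GLit} (h : IsInterp Bs I) {a : GAtom} :
    GLit.neg a ∈ I ↔ a ∈ Bs ∧ a ∉ plus I := by
  constructor
  · intro hm
    have haB : a ∈ Bs := h.1 (GLit.neg a) hm
    rcases h.2 a haB with ⟨hp, hn⟩ | ⟨hn, hp⟩
    · exact absurd hm hn
    · exact ⟨haB, hp⟩
  · rintro ⟨haB, hnp⟩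
    rcases h.2 a haB with ⟨hp, _⟩ | ⟨hn, _⟩
    · exact absurd hp hnp
    · exact hn

lemma interp_eq_toI {Bs : Set GAtom} {I : Set GLit} (h : IsInterp Bs I) :
    I = toI Bs (plus I) := by
  ext l
  cases l with
  | pos a => rw [pos_mem_toI]; exact Iff.rfl
  | neg a => rw [neg_mem_toI]; exact interp_neg_mem h

lemma mem_filter_isPos {r : GRule} {l : GLit} :
    l ∈ r.body.filter GLit.isPos ↔ ∃ b, l = GLit.pos b ∧ GLit.pos b ∈ r.body := by
  rw [List.mem_filter]
  constructor
  · rintro ⟨hl, hp⟩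
    cases l with
    | pos b => exact ⟨b, rfl, hl⟩
    | neg b => simp [GLit.isPos] at hp
  · rintro ⟨b, rfl, hb⟩
    exact ⟨hb, rfl⟩

lemma to_stable {P : GProgram} {M : Set GAtom} (hM : SS P M) :
    IsStableG P (toI (gAtoms P) M) := by
  refine ⟨interp_toI hM.1, ?_, ?_⟩
  · intro r hr hbody
    have hpos : ∀ b ∈ posb r, b ∈ M := fun b hb => pos_mem_toI.mp (hbody _ hb)
    have hneg : ∀ b ∈ negb r, b ∉ M := fun b hb => (neg_mem_toI.mp (hbody _ hb)).2
    obtain ⟨a, ha, haM⟩ := hM.2.1 r hr hpos hneg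
    exact ⟨a, ha, pos_mem_toI.mpr haM⟩
  · rintro ⟨J, hJi, hJr, hJsub⟩
    rw [plus_toI] at hJsub
    refine hM.2.2 (plus J) (interp_plus_sub hJi) ?_ hJsub
    intro r hr hneg hpos
    have hr' : (⟨r.head, r.body.filter GLit.isPos⟩ : GRule) ∈ reductG P (toI (gAtoms P) M) := by
      refine ⟨r, hr, ?_, rfl⟩
      intro a ha
      rw [plus_toI]
      exact hneg a ha
    have hbodyc : ∀ l ∈ (⟨r.head, r.body.filter GLit.isPos⟩ : GRule).body, l ∈ J := by
      intro l hl
      obtain ⟨b, rfl, hb⟩ := mem_filter_isPos.mp hl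
      exact hpos b hb
    obtain ⟨a, ha, hpa⟩ := hJr _ hr' hbodyc
    exact ⟨a, ha, hpa⟩

lemma stable_to {P : GProgram} {I : Set GLit} (hI : IsStableG P I) :
    SS P (plus I) ∧ I = toI (gAtoms P) (plus I) := by
  obtain ⟨hint, hmod, hmin⟩ := hI
  refine ⟨⟨interp_plus_sub hint, ?_, ?_⟩, interp_eq_toI hint⟩
  · intro r hr hpos hneg
    have hbody : ∀ l ∈ r.body, l ∈ I := by
      intro l hl
      cases l with
      | pos b => exact hpos b hl
      | neg b =>
        exact (interp_neg_mem hint).mpr ⟨body_mem_gAtoms hr hl, hneg b hl⟩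
    exact hmod r hr hbody
  · intro N hNB hNr hss
    refine hmin ⟨toI (gAtoms P) N, interp_toI hNB, ?_, by rw [plus_toI]; exact hss⟩
    rintro r' ⟨r, hr, hneg, rfl⟩ hbody
    have hpos : ∀ b ∈ posb r, b ∈ N := by
      intro b hb
      have : GLit.pos b ∈ toI (gAtoms P) N :=
        hbody _ (List.mem_filter.mpr ⟨hb, rfl⟩)
      exact pos_mem_toI.mp this
    obtain ⟨a, ha, haN⟩ := hNr r hr hneg hpos
    exact ⟨a, ha, pos_mem_toI.mpr haN⟩

end S4

/-- every ground normal ASP program without constraints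
(every rule has exactly one head atom) that is stratified has exactly one
stable model. -/
theorem statement4 (P : GProgram) (hfin : P.Finite)
    (hnormal : ∀ r ∈ P, r.head.length = 1)
    (hstrat : StratifiedG P) :
    ∃! I, IsStableG P I := by
  have hSS : S4.SS P (S4.MM P) := S4.MM_SS hfin hnormal hstrat
  refine ⟨S4.toI (gAtoms P) (S4.MM P), S4.to_stable hSS, ?_⟩
  intro I hI
  obtain ⟨hSSI, hIeq⟩ := S4.stable_to hI
  rw [hIeq, S4.SS_unique hfin hnormal hstrat hSSI]
end

section
/- Splitting theorem for ground programs (the result underlying Theorem 1 of the paper): let P be a ground ASP program and U a splitting set for P, i.e. a set of ground atoms such that every rule of P having a head atom in U has all of its atoms in U. Let b_U(P) be the bottom of P (the rules of P all of whose atoms are in U), and for a set of atoms X ⊆ U let e_U(P ∖ b_U(P), X) be the partial evaluation of the top: delete every rule of P ∖ b_U(P) that has a positive body literal over an atom of U not in X or a negative body literal over an atom of U that is in X, and delete all remaining body literals over atoms of U from the surviving rules. Then an interpretation whose set of true atoms is A is a stable model of P if and only if A = X ∪ Y where X is the set of true atoms of a stable model of b_U(P), Y is the set of true atoms of a stable model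 of e_U(P ∖ b_U(P), X), and X = A ∩ U. -/
open ASP

namespace ASPAux

/-- Set-level satisfaction of a rule by a set of true atoms. -/
def satRule (A : Set GAtom) (r : GRule) : Prop :=
  ((∀ a, GLit.pos a ∈ r.body → a ∈ A) ∧ (∀ a, GLit.neg a ∈ r.body → a ∉ A)) →
  ∃ h ∈ r.head, h ∈ A

/-- Set-level satisfaction of (the reduct w.r.t. `A` of) a rule by `S`. -/
def redSat (A S : Set GAtom) (r : GRule) : Prop :=
  (∀ a, GLit.neg a ∈ r.body → a ∉ A) →
  (∀ a, GLit.pos a ∈ r.body → a ∈ S) → ∃ h ∈ r.head, h ∈ S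

/-- Set-level stable model condition. -/
def StableSet (Q : GProgram) (A : Set GAtom) : Prop :=
  (∀ r ∈ Q, satRule A r) ∧ ∀ S, S ⊂ A → ∃ r ∈ Q, ¬ redSat A S r

/-- The canonical interpretation over base `C` with true atoms `S`. -/
def interpOf (C S : Set GAtom) : Set GLit :=
  {l | match l with
       | .pos a => a ∈ C ∧ a ∈ S
       | .neg a => a ∈ C ∧ a ∉ S}

lemma pos_mem_interpOf {C S : Set GAtom} {a : GAtom} :
    GLit.pos a ∈ interpOf C S ↔ a ∈ C ∧ a ∈ S := Iff.rfl

lemma neg_mem_interpOf {C S : Set GAtom} {a : GAtom} :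
    GLit.neg a ∈ interpOf C S ↔ a ∈ C ∧ a ∉ S := Iff.rfl

lemma plus_interpOf (C S : Set GAtom) : plus (interpOf C S) = C ∩ S := rfl

lemma isInterp_interpOf (C S : Set GAtom) : IsInterp C (interpOf C S) := by
  constructor
  · rintro (a | a) hl <;> exact hl.1
  · intro a ha
    by_cases h : a ∈ S
    · exact Or.inl ⟨⟨ha, h⟩, fun hc => hc.2 h⟩
    · exact Or.inr ⟨⟨ha, h⟩, fun hc => h hc.2⟩

lemma pos_mem_iff {J : Set GLit} {a : GAtom} : GLit.pos a ∈ J ↔ a ∈ plus J := Iff.rfl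

lemma plus_subset {C : Set GAtom} {J : Set GLit} (hJ : IsInterp C J) : plus J ⊆ C :=
  fun a ha => hJ.1 (GLit.pos a) ha

lemma neg_mem_iff {C : Set GAtom} {J : Set GLit} (hJ : IsInterp C J) {a : GAtom}
    (ha : a ∈ C) : GLit.neg a ∈ J ↔ a ∉ plus J := by
  rcases hJ.2 a ha with ⟨hp, hn⟩ | ⟨hn, hp⟩
  · exact ⟨fun h => absurd h hn, fun h => absurd hp h⟩
  · exact ⟨fun _ => hp, fun _ => hn⟩

lemma body_atom_mem {Q : GProgram} {r : GRule} (hr : r ∈ Q) {l : GLit}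
    (hl : l ∈ r.body) : l.atom ∈ gAtoms Q := ⟨r, hr, Or.inr ⟨l, hl, rfl⟩⟩

lemma head_atom_mem {Q : GProgram} {r : GRule} (hr : r ∈ Q) {h : GAtom}
    (hh : h ∈ r.head) : h ∈ gAtoms Q := ⟨r, hr, Or.inl hh⟩

lemma isModelG_iff {Q : GProgram} {J : Set GLit} (hJ : IsInterp (gAtoms Q) J) :
    IsModelG Q J ↔ ∀ r ∈ Q, satRule (plus J) r := by
  constructor
  · intro h r hr ⟨hp, hn⟩
    refine h r hr ?_
    rintro (a | a) hl
    · exact hp a hl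
    · exact (neg_mem_iff hJ (body_atom_mem hr hl)).2 (hn a hl)
  · intro h r hr hbody
    refine h r hr ⟨fun a ha => hbody _ ha, fun a ha => ?_⟩
    exact (neg_mem_iff hJ (body_atom_mem hr ha)).1 (hbody _ ha)

lemma isModelG_reduct_iff {Q : GProgram} {J K : Set GLit} :
    IsModelG (reductG Q J) K ↔ ∀ r ∈ Q, redSat (plus J) (plus K) r := by
  constructor
  · intro h r hr hneg hpos
    refine h ⟨r.head, r.body.filter GLit.isPos⟩ ⟨r, hr, hneg, rfl⟩ ?_
    intro l hl
    rcases List.mem_filter.1 hl with ⟨hl1, hl2⟩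
    cases l with
    | pos a => exact hpos a hl1
    | neg a => simp [GLit.isPos] at hl2
  · rintro h r' ⟨r, hr, hneg, rfl⟩ hbody
    refine h r hr hneg fun a ha => ?_
    exact hbody (GLit.pos a) (List.mem_filter.2 ⟨ha, rfl⟩)

lemma isStableG_iff {Q : GProgram} {J : Set GLit} (hJ : IsInterp (gAtoms Q) J) :
    IsStableG Q J ↔ StableSet Q (plus J) := by
  constructor
  · rintro ⟨_, hm, hmin⟩
    refine ⟨(isModelG_iff hJ).1 hm, fun S hS => ?_⟩
    by_contra hall
    push_neg at hall
    refine hmin ⟨interpOf (gAtoms Q) S, isInterp_interpOf _ _, ?_, ?_⟩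
    · rw [isModelG_reduct_iff, plus_interpOf,
        Set.inter_eq_self_of_subset_right (hS.1.trans (plus_subset hJ))]
      exact hall
    · rw [plus_interpOf,
        Set.inter_eq_self_of_subset_right (hS.1.trans (plus_subset hJ))]
      exact hS
  · rintro ⟨hm, hmin⟩
    refine ⟨hJ, (isModelG_iff hJ).2 hm, ?_⟩
    rintro ⟨K, hKi, hKm, hKlt⟩
    rcases hmin (plus K) hKlt with ⟨r, hr, hnr⟩
    exact hnr (isModelG_reduct_iff.1 hKm r hr)

lemma supported {Q : GProgram} {A : Set GAtom} (h : StableSet Q A) {a : GAtom}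
    (ha : a ∈ A) :
    ∃ r ∈ Q, a ∈ r.head ∧ (∀ b, GLit.neg b ∈ r.body → b ∉ A) ∧
      (∀ b, GLit.pos b ∈ r.body → b ∈ A ∧ b ≠ a) := by
  have hss : A \ {a} ⊂ A := by
    rw [Set.ssubset_def]
    exact ⟨Set.diff_subset, fun hsub => (hsub ha).2 rfl⟩
  rcases h.2 (A \ {a}) hss with ⟨r, hr, hnr⟩
  unfold redSat at hnr
  push_neg at hnr
  rcases hnr with ⟨hneg, hpos, hnohead⟩
  rcases h.1 r hr ⟨fun b hb => (hpos b hb).1, hneg⟩ with ⟨h0, hh0, hh0A⟩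
  have : h0 = a := by
    by_contra hne
    exact hnohead h0 hh0 ⟨hh0A, hne⟩
  subst this
  exact ⟨r, hr, hh0, hneg, fun b hb => ⟨(hpos b hb).1, fun he => (hpos b hb).2 (he ▸ rfl)⟩⟩

lemma mem_removeU {U : Set GAtom} {l : GLit} :
    ∀ {L : List GLit}, l ∈ removeU U L ↔ l ∈ L ∧ l.atom ∉ U := by
  intro L
  induction L with
  | nil => simp [removeU]
  | cons l' L ih =>
    by_cases h : l'.atom ∈ U
    · simp only [removeU, if_pos h, ih, List.mem_cons]
      constructor
      · rintro ⟨h1, h2⟩; exact ⟨Or.inr h1, h2⟩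
      · rintro ⟨h1 | h1, h2⟩
        · exact absurd (h1 ▸ h) h2
        · exact ⟨h1, h2⟩
    · simp only [removeU, if_neg h, List.mem_cons, ih]
      constructor
      · rintro (rfl | ⟨h1, h2⟩)
        · exact ⟨Or.inl rfl, h⟩
        · exact ⟨Or.inr h1, h2⟩
      · rintro ⟨rfl | h1, h2⟩
        · exact Or.inl rfl
        · exact Or.inr ⟨h1, h2⟩

lemma top_head_notU {P : GProgram} {U : Set GAtom} (hU : splittingSet P U)
    {r : GRule} (hr : r ∈ P \ bottomProg P U) {h : GAtom} (hh : h ∈ r.head) :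
    h ∉ U := fun hhu => hr.2 ⟨hr.1, hU r hr.1 ⟨h, hh, hhu⟩⟩

lemma bot_atoms_U {P : GProgram} {U : Set GAtom} {a : GAtom}
    (ha : a ∈ gAtoms (bottomProg P U)) : a ∈ U := by
  rcases ha with ⟨r, hr, hain⟩
  exact hr.2 a hain

lemma top_atoms {P : GProgram} {U X : Set GAtom} (hU : splittingSet P U)
    {a : GAtom} (ha : a ∈ gAtoms (topEval (P \ bottomProg P U) U X)) :
    a ∉ U := by
  rcases ha with ⟨r', ⟨r, hrT, _, _, rfl⟩, hain⟩
  rcases hain with hh | ⟨l, hl, rfl⟩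
  · exact top_head_notU hU hrT hh
  · exact (mem_removeU.1 hl).2

section Core

variable {P : GProgram} {U : Set GAtom}

/-- Forward: `X = A ∩ U` is in the base of the bottom and stable for it. -/
lemma fwd_bot (hU : splittingSet P U) {A : Set GAtom} (hSt : StableSet P A) :
    A ∩ U ⊆ gAtoms (bottomProg P U) ∧ StableSet (bottomProg P U) (A ∩ U) := by
  constructor
  · rintro a ⟨haA, haU⟩
    rcases supported hSt haA with ⟨r, hr, ahead, _, _⟩
    exact ⟨r, ⟨hr, hU r hr ⟨a, ahead, haU⟩⟩, Or.inl ahead⟩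
  constructor
  · rintro r hr ⟨hp, hn⟩
    rcases hSt.1 r hr.1 ⟨fun b hb => (hp b hb).1,
        fun b hb hbA => hn b hb ⟨hbA, hr.2 b (Or.inr ⟨_, hb, rfl⟩)⟩⟩ with ⟨h, hh, hhA⟩
    exact ⟨h, hh, hhA, hr.2 h (Or.inl hh)⟩
  · intro S hS
    by_contra hall
    push_neg at hall
    rcases Set.exists_of_ssubset hS with ⟨x, hxX, hxS⟩
    have hss : S ∪ (A \ U) ⊂ A := by
      rw [Set.ssubset_def]
      refine ⟨Set.union_subset (hS.1.trans Set.inter_subset_left) Set.diff_subset, ?_⟩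
      intro hsub
      rcases hsub hxX.1 with h | h
      · exact hxS h
      · exact h.2 hxX.2
    rcases hSt.2 _ hss with ⟨r, hrP, hnr⟩
    unfold redSat at hnr
    push_neg at hnr
    rcases hnr with ⟨hneg, hpos, hnohead⟩
    by_cases hrb : r ∈ bottomProg P U
    · have hp' : ∀ b, GLit.pos b ∈ r.body → b ∈ S := by
        intro b hb
        rcases hpos b hb with hbS | hbd
        · exact hbS
        · exact absurd (hrb.2 b (Or.inr ⟨_, hb, rfl⟩)) hbd.2
      rcases hall r hrb (fun b hb hbX => hneg b hb hbX.1) hp' with ⟨h, hh, hhS⟩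
      exact hnohead h hh (Or.inl hhS)
    · rcases hSt.1 r hrP ⟨fun b hb => hss.1 (hpos b hb), hneg⟩ with ⟨h, hh, hhA⟩
      exact hnohead h hh (Or.inr ⟨hhA, top_head_notU hU ⟨hrP, hrb⟩ hh⟩)

/-- Forward: `Y = A \ U` is in the base of the top evaluation and stable for it. -/
lemma fwd_top (hU : splittingSet P U) {A : Set GAtom} (hSt : StableSet P A) :
    A \ U ⊆ gAtoms (topEval (P \ bottomProg P U) U (A ∩ U)) ∧
    StableSet (topEval (P \ bottomProg P U) U (A ∩ U)) (A \ U) := by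
  constructor
  · rintro a ⟨haA, haU⟩
    rcases supported hSt haA with ⟨r, hr, ahead, hneg, hpos⟩
    have hrT : r ∈ P \ bottomProg P U :=
      ⟨hr, fun hrb => haU (hrb.2 a (Or.inl ahead))⟩
    refine ⟨⟨r.head, removeU U r.body⟩,
      ⟨r, hrT, fun b hb hbU => ⟨(hpos b hb).1, hbU⟩,
        fun b hb _ hbX => hneg b hb hbX.1, rfl⟩, Or.inl ahead⟩
  constructor
  · rintro r' ⟨r, hrT, hposU, hnegU, rfl⟩ ⟨hp, hn⟩
    have hp' : ∀ b, GLit.pos b ∈ r.body → b ∈ A := by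
      intro b hb
      by_cases hbU : b ∈ U
      · exact (hposU b hb hbU).1
      · exact (hp b (mem_removeU.2 ⟨hb, hbU⟩)).1
    have hn' : ∀ b, GLit.neg b ∈ r.body → b ∉ A := by
      intro b hb hbA
      by_cases hbU : b ∈ U
      · exact hnegU b hb hbU ⟨hbA, hbU⟩
      · exact hn b (mem_removeU.2 ⟨hb, hbU⟩) ⟨hbA, hbU⟩
    rcases hSt.1 r hrT.1 ⟨hp', hn'⟩ with ⟨h, hh, hhA⟩
    exact ⟨h, hh, hhA, top_head_notU hU hrT hh⟩
  · intro S hS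
    by_contra hall
    push_neg at hall
    rcases Set.exists_of_ssubset hS with ⟨y, hyY, hyS⟩
    have hss : A ∩ U ∪ S ⊂ A := by
      rw [Set.ssubset_def]
      refine ⟨Set.union_subset Set.inter_subset_left (hS.1.trans Set.diff_subset), ?_⟩
      intro hsub
      rcases hsub hyY.1 with h | h
      · exact hyY.2 h.2
      · exact hyS h
    rcases hSt.2 _ hss with ⟨r, hrP, hnr⟩
    unfold redSat at hnr
    push_neg at hnr
    rcases hnr with ⟨hneg, hpos, hnohead⟩
    by_cases hrb : r ∈ bottomProg P U
    · rcases hSt.1 r hrP ⟨fun b hb => hss.1 (hpos b hb), hneg⟩ with ⟨h, hh, hhA⟩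
      exact hnohead h hh (Or.inl ⟨hhA, hrb.2 h (Or.inl hh)⟩)
    · have hposU : ∀ b, GLit.pos b ∈ r.body → b ∈ U → b ∈ A ∩ U := by
        intro b hb hbU
        rcases hpos b hb with hbX | hbS
        · exact hbX
        · exact absurd hbU fun h => (hS.1 hbS).2 h
      have hr'mem : (⟨r.head, removeU U r.body⟩ : GRule) ∈
          topEval (P \ bottomProg P U) U (A ∩ U) :=
        ⟨r, ⟨hrP, hrb⟩, hposU, fun b hb _ hbX => hneg b hb hbX.1, rfl⟩
      have hp2 : ∀ b, GLit.pos b ∈ removeU U r.body → b ∈ S := by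
        intro b hb
        rcases mem_removeU.1 hb with ⟨hbb, hbU⟩
        rcases hpos b hbb with hbX | hbS
        · exact absurd hbX.2 hbU
        · exact hbS
      rcases hall _ hr'mem
        (fun b hb hbY => hneg b (mem_removeU.1 hb).1 hbY.1) hp2 with ⟨h, hh, hhS⟩
      exact hnohead h hh (Or.inr hhS)

/-- Backward direction of the splitting theorem, at the level of sets. -/
lemma bwd (hU : splittingSet P U) {X Y : Set GAtom} (hX : X ⊆ U)
    (hY : ∀ a ∈ Y, a ∉ U)
    (hSb : StableSet (bottomProg P U) X)
    (hSt : StableSet (topEval (P \ bottomProg P U) U X) Y) :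
    StableSet P (X ∪ Y) := by
  have hAU : (X ∪ Y) ∩ U = X := by
    ext a
    constructor
    · rintro ⟨ha | ha, haU⟩
      · exact ha
      · exact absurd haU (hY a ha)
    · exact fun ha => ⟨Or.inl ha, hX ha⟩
  constructor
  · rintro r hrP ⟨hp, hn⟩
    by_cases hrb : r ∈ bottomProg P U
    · have hp' : ∀ b, GLit.pos b ∈ r.body → b ∈ X := by
        intro b hb
        exact hAU.subset ⟨hp b hb, hrb.2 b (Or.inr ⟨_, hb, rfl⟩)⟩
      rcases hSb.1 r hrb ⟨hp', fun b hb hbX => hn b hb (Or.inl hbX)⟩ with ⟨h, hh, hhX⟩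
      exact ⟨h, hh, Or.inl hhX⟩
    · have hr'mem : (⟨r.head, removeU U r.body⟩ : GRule) ∈
          topEval (P \ bottomProg P U) U X :=
        ⟨r, ⟨hrP, hrb⟩, fun b hb hbU => hAU.subset ⟨hp b hb, hbU⟩,
          fun b hb hbU hbX => hn b hb (Or.inl hbX), rfl⟩
      have hp' : ∀ b, GLit.pos b ∈ removeU U r.body → b ∈ Y := by
        intro b hb
        rcases mem_removeU.1 hb with ⟨hbb, hbU⟩
        rcases hp b hbb with hbX | hbY
        · exact absurd (hX hbX) hbU
        · exact hbY
      have hn' : ∀ b, GLit.neg b ∈ removeU U r.body → b ∉ Y :=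
        fun b hb hbY => hn b (mem_removeU.1 hb).1 (Or.inr hbY)
      rcases hSt.1 _ hr'mem ⟨hp', hn'⟩ with ⟨h, hh, hhY⟩
      exact ⟨h, hh, Or.inr hhY⟩
  · intro S hSsub
    by_cases hc : S ∩ U = X
    · have hStY : S \ U ⊂ Y := by
        rw [Set.ssubset_def]
        constructor
        · rintro a ⟨haS, haU⟩
          rcases hSsub.1 haS with h | h
          · exact absurd (hX h) haU
          · exact h
        · intro hsub
          apply hSsub.2
          rintro a (ha | ha)
          · exact (hc.symm.subset ha).1
          · exact (hsub ha).1
      rcases hSt.2 _ hStY with ⟨r', ⟨r, hrT, hpU, hnU, rfl⟩, hnr⟩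
      refine ⟨r, hrT.1, fun hred => hnr fun hneg' hpos' => ?_⟩
      have hn' : ∀ b, GLit.neg b ∈ r.body → b ∉ X ∪ Y := by
        rintro b hb (hbX | hbY)
        · exact hnU b hb (hX hbX) hbX
        · exact hneg' b (mem_removeU.2 ⟨hb, hY b hbY⟩) hbY
      have hp' : ∀ b, GLit.pos b ∈ r.body → b ∈ S := by
        intro b hb
        by_cases hbU : b ∈ U
        · exact (hc.symm.subset (hpU b hb hbU)).1
        · exact (hpos' b (mem_removeU.2 ⟨hb, hbU⟩)).1
      rcases hred hn' hp' with ⟨h, hh, hhS⟩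
      exact ⟨h, hh, hhS, top_head_notU hU hrT hh⟩
    · have hSbX : S ∩ U ⊂ X := by
        rw [Set.ssubset_iff_subset_ne]
        refine ⟨?_, hc⟩
        rintro a ⟨haS, haU⟩
        rcases hSsub.1 haS with h | h
        · exact h
        · exact absurd haU (hY a h)
      rcases hSb.2 _ hSbX with ⟨r, hrb, hnr⟩
      refine ⟨r, hrb.1, fun hred => hnr fun hneg' hpos' => ?_⟩
      have hn' : ∀ b, GLit.neg b ∈ r.body → b ∉ X ∪ Y := by
        rintro b hb (hbX | hbY)
        · exact hneg' b hb hbX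
        · exact hY b hbY (hrb.2 b (Or.inr ⟨_, hb, rfl⟩))
      rcases hred hn' (fun b hb => (hpos' b hb).1) with ⟨h, hh, hhS⟩
      exact ⟨h, hh, hhS, hrb.2 h (Or.inl hh)⟩

end Core

end ASPAux

open ASPAux

/-- splitting theorem for ground programs: if `U` is a splitting
set for the ground program `P`, then an interpretation `I` whose set of true
atoms is `A` is a stable model of `P` iff `A = X ∪ Y`, where `X` is the set of
true atoms of a stable model of the bottom `b_U(P)`, `Y` is the set of true
atoms of a stable model of the partial evaluation
`e_U(P ∖ b_U(P), X)`, and `X = A ∩ U`. -/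
theorem statement9 (P : GProgram) (hfin : P.Finite)
    (hrules : ∀ r ∈ P, r.head ≠ [] ∨ r.body ≠ [])
    (U : Set GAtom) (hU : splittingSet P U)
    (I : Set GLit) (hI : IsInterp (gAtoms P) I)
    (A : Set GAtom) (hA : plus I = A) :
    IsStableG P I ↔
    ∃ X Y, X ⊆ U ∧ A = X ∪ Y ∧
      (∃ Ib, IsStableG (bottomProg P U) Ib ∧ plus Ib = X) ∧
      (∃ It, IsStableG (topEval (P \ bottomProg P U) U X) It ∧ plus It = Y) ∧
      X = A ∩ U := by
  have hbr : IsStableG P I ↔ StableSet P A := hA ▸ isStableG_iff hI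
  rw [hbr]
  constructor
  · intro hSt
    obtain ⟨hXsub, hXst⟩ := fwd_bot hU hSt
    obtain ⟨hYsub, hYst⟩ := fwd_top hU hSt
    refine ⟨A ∩ U, A \ U, Set.inter_subset_right,
      (Set.inter_union_diff A U).symm, ?_, ?_, rfl⟩
    · refine ⟨interpOf (gAtoms (bottomProg P U)) (A ∩ U), ?_, ?_⟩
      · rw [isStableG_iff (isInterp_interpOf _ _), plus_interpOf,
          Set.inter_eq_self_of_subset_right hXsub]
        exact hXst
      · rw [plus_interpOf]
        exact Set.inter_eq_self_of_subset_right hXsub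
    · refine ⟨interpOf (gAtoms (topEval (P \ bottomProg P U) U (A ∩ U))) (A \ U),
        ?_, ?_⟩
      · rw [isStableG_iff (isInterp_interpOf _ _), plus_interpOf,
          Set.inter_eq_self_of_subset_right hYsub]
        exact hYst
      · rw [plus_interpOf]
        exact Set.inter_eq_self_of_subset_right hYsub
  · rintro ⟨X, Y, hXU, hAXY, ⟨Ib, hIbSt, hIbp⟩, ⟨It, hItSt, hItp⟩, hXAU⟩
    have hYnot : ∀ a ∈ Y, a ∉ U := fun a ha =>
      top_atoms hU (plus_subset hItSt.1 (hItp.symm.subset ha))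
    have hSb : StableSet (bottomProg P U) X :=
      hIbp ▸ (isStableG_iff hIbSt.1).1 hIbSt
    have hSt2 : StableSet (topEval (P \ bottomProg P U) U X) Y :=
      hItp ▸ (isStableG_iff hItSt.1).1 hItSt
    have hfinal := bwd hU hXU hYnot hSb hSt2
    rwa [← hAXY] at hfinal
end
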